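/- The function z ↦ e^{-1/(2z)}·√(z/(1−z)) is integrable on the interval (0,1), and ∫_0^1 e^{-1/(2z)}·√(z/(1−z)) dz = √(π/(2e)). -/

import Mathlib

open MeasureTheory

/-- Optimal homodyne scale density Q(z) = e^{-1/(2z)}·√(z/(1−z)). -/
noncomputable def Qhom (z : ℝ) : ℝ :=
  Real.exp (-1 / (2 * z)) * Real.sqrt (z / (1 - z))

open Set Real Filter

private noncomputable def ellH (x : ℝ) : ℝ := Real.exp (-(x ^ 2) / 2) / (1 + x ^ 2) ^ 2

private lemma gauss_integrableOn : IntegrableOn (fun x : ℝ => Real.exp (-(x ^ 2) / 2)) (Ioi 0) := by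
  have h : IntegrableOn (fun x : ℝ => Real.exp (-(1 / 2 : ℝ) * x ^ 2)) (Ioi 0) :=
    (integrable_exp_neg_mul_sq (by norm_num)).integrableOn
  refine h.congr_fun (fun x _ => by ring_nf) measurableSet_Ioi

private lemma ell_integrableOn : IntegrableOn ellH (Ioi 0) := by
  have hc : Continuous ellH := by
    apply Continuous.div
    · continuity
    · continuity
    · intro x; positivity
  refine gauss_integrableOn.mono' hc.aestronglyMeasurable ?_
  · filter_upwards with x
    have h1 : (0:ℝ) < (1 + x ^ 2) ^ 2 := by positivity
    have h2 : (1:ℝ) ≤ (1 + x ^ 2) ^ 2 := by nlinarith [sq_nonneg x]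
    unfold ellH
    rw [Real.norm_eq_abs, abs_of_nonneg (by positivity)]
    rw [div_le_iff₀ h1]
    nlinarith [Real.exp_pos (-(x ^ 2) / 2)]

private lemma FH_deriv (x : ℝ) :
    HasDerivAt (fun x : ℝ => x * Real.exp (-(x ^ 2) / 2) / (1 + x ^ 2))
      (2 * ellH x - Real.exp (-(x ^ 2) / 2)) x := by
  have hne : (1 + x ^ 2) ≠ 0 := by positivity
  have he : HasDerivAt (fun x : ℝ => Real.exp (-(x ^ 2) / 2)) (-x * Real.exp (-(x ^ 2) / 2)) x := by
    have h1 : HasDerivAt (fun x : ℝ => -(x ^ 2) / 2) (-x) x := by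
      have := ((hasDerivAt_pow 2 x).neg).div_const 2
      simpa using this.congr_deriv (by ring)
    simpa [mul_comm] using h1.exp
  have hnum := (hasDerivAt_id x).mul he
  have hden : HasDerivAt (fun x : ℝ => 1 + x ^ 2) (2 * x) x := by
    simpa using (hasDerivAt_pow 2 x).const_add 1
  have := hnum.div hden hne
  refine this.congr_deriv ?_
  simp only [id_eq, Pi.mul_apply]
  unfold ellH
  field_simp
  ring

private lemma FH_tendsto :
    Tendsto (fun x : ℝ => x * Real.exp (-(x ^ 2) / 2) / (1 + x ^ 2)) atTop (nhds 0) := by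
  have hexp : Tendsto (fun x : ℝ => Real.exp (-(x ^ 2) / 2)) atTop (nhds 0) := by
    apply Real.tendsto_exp_atBot.comp
    have h1 : Tendsto (fun x : ℝ => x ^ 2 / 2) atTop atTop :=
      (tendsto_pow_atTop (two_ne_zero)).atTop_div_const (by norm_num)
    have := tendsto_neg_atTop_atBot.comp h1
    refine this.congr (fun x => by simp [neg_div])
  refine tendsto_of_tendsto_of_tendsto_of_le_of_le' tendsto_const_nhds hexp ?_ ?_
  · filter_upwards [eventually_ge_atTop (0:ℝ)] with x hx
    positivity
  · filter_upwards [eventually_ge_atTop (0:ℝ)] with x hx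
    have h1 : (0:ℝ) < 1 + x ^ 2 := by positivity
    rw [div_le_iff₀ h1]
    have hb : x ≤ 1 + x ^ 2 := by nlinarith [sq_nonneg (x - 1)]
    have := mul_le_mul_of_nonneg_right hb (Real.exp_pos (-(x ^ 2) / 2)).le
    linarith

private lemma ell_integral : ∫ x in Ioi (0:ℝ), ellH x = Real.sqrt (2 * π) / 4 := by
  have hint : IntegrableOn (fun x => 2 * ellH x - Real.exp (-(x ^ 2) / 2)) (Ioi 0) :=
    ((ell_integrableOn.const_mul 2).sub gauss_integrableOn)
  have hFTC := integral_Ioi_of_hasDerivAt_of_tendsto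
    (f := fun x : ℝ => x * Real.exp (-(x ^ 2) / 2) / (1 + x ^ 2))
    (f' := fun x => 2 * ellH x - Real.exp (-(x ^ 2) / 2))
    (a := 0) (m := 0)
    ((Continuous.div (by continuity) (by continuity)
      (fun x => by positivity)).continuousWithinAt)
    (fun x _ => FH_deriv x) hint FH_tendsto
  simp only [zero_mul, zero_div, sub_zero, zero_sub, neg_zero] at hFTC
  have hsplit : ∫ x in Ioi (0:ℝ), (2 * ellH x - Real.exp (-(x ^ 2) / 2))
      = 2 * (∫ x in Ioi (0:ℝ), ellH x) - ∫ x in Ioi (0:ℝ), Real.exp (-(x ^ 2) / 2) := by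
    rw [integral_sub (ell_integrableOn.const_mul 2) gauss_integrableOn,
      integral_const_mul]
  have hgauss : ∫ x in Ioi (0:ℝ), Real.exp (-(x ^ 2) / 2) = Real.sqrt (2 * π) / 2 := by
    have := integral_gaussian_Ioi (1/2)
    rw [setIntegral_congr_fun measurableSet_Ioi
      (fun x _ => by ring_nf : EqOn (fun x : ℝ => Real.exp (-(x ^ 2) / 2))
        (fun x : ℝ => Real.exp (-(1/2 : ℝ) * x ^ 2)) (Ioi 0)), this]
    rw [show π / (1/2 : ℝ) = 2 * π by ring]
  rw [hsplit, hgauss] at hFTC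
  linarith

private lemma subst_map : (fun x : ℝ => (1 + x ^ 2)⁻¹) '' (Ioi 0) = Ioo 0 1 := by
  ext y
  constructor
  · rintro ⟨x, hx, rfl⟩
    have hx0 : (0:ℝ) < x := hx
    have h1 : (1:ℝ) < 1 + x ^ 2 := by nlinarith
    exact ⟨by positivity, by rw [inv_lt_one_iff₀]; right; exact h1⟩
  · rintro ⟨hy0, hy1⟩
    refine ⟨Real.sqrt (1 / y - 1), ?_, ?_⟩
    · have : (0:ℝ) < 1 / y - 1 := by
        rw [sub_pos, lt_div_iff₀ hy0]; linarith
      exact Real.sqrt_pos.2 this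
    · have h1 : (0:ℝ) ≤ 1 / y - 1 := by
        rw [sub_nonneg, le_div_iff₀ hy0]; linarith
      show (1 + Real.sqrt (1 / y - 1) ^ 2)⁻¹ = y
      rw [Real.sq_sqrt h1]
      field_simp
      ring

private lemma subst_inj : InjOn (fun x : ℝ => (1 + x ^ 2)⁻¹) (Ioi 0) := by
  intro a ha b hb hab
  have ha0 : (0:ℝ) < a := ha
  have hb0 : (0:ℝ) < b := hb
  have h1 : (1 + a ^ 2 : ℝ) ≠ 0 := by positivity
  have h2 : (1 + b ^ 2 : ℝ) ≠ 0 := by positivity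
  simp only [inv_inj] at hab
  have : a ^ 2 = b ^ 2 := by linarith [hab]
  nlinarith

private lemma subst_deriv (x : ℝ) :
    HasDerivAt (fun x : ℝ => (1 + x ^ 2)⁻¹) (-(2 * x) / (1 + x ^ 2) ^ 2) x := by
  have hden : HasDerivAt (fun x : ℝ => 1 + x ^ 2) (2 * x) x := by
    simpa using (hasDerivAt_pow 2 x).const_add 1
  exact hden.inv (by positivity)

private lemma pointwise_eq {x : ℝ} (hx : x ∈ Ioi (0:ℝ)) :
    |(-(2 * x) / (1 + x ^ 2) ^ 2)| • Qhom ((1 + x ^ 2)⁻¹)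
      = 2 * Real.exp (-(1:ℝ) / 2) * ellH x := by
  have hx0 : (0:ℝ) < x := hx
  have h1 : (0:ℝ) < 1 + x ^ 2 := by positivity
  have habs : |(-(2 * x) / (1 + x ^ 2) ^ 2)| = 2 * x / (1 + x ^ 2) ^ 2 := by
    rw [abs_div, abs_neg, abs_of_nonneg (by positivity : (0:ℝ) ≤ 2 * x),
      abs_of_nonneg (by positivity : (0:ℝ) ≤ (1 + x ^ 2) ^ 2)]
  have hexp : -1 / (2 * (1 + x ^ 2)⁻¹) = -(1 + x ^ 2) / 2 := by
    field_simp
  have hratio : (1 + x ^ 2)⁻¹ / (1 - (1 + x ^ 2)⁻¹) = (x⁻¹) ^ 2 := by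
    have hx2 : (x:ℝ) ^ 2 ≠ 0 := by positivity
    field_simp
    ring
  have hsqrt : Real.sqrt ((1 + x ^ 2)⁻¹ / (1 - (1 + x ^ 2)⁻¹)) = x⁻¹ := by
    rw [hratio, Real.sqrt_sq (by positivity)]
  unfold Qhom ellH
  rw [smul_eq_mul, habs, hexp, hsqrt]
  rw [show -(1 + x ^ 2) / 2 = -(1:ℝ)/2 + -(x ^ 2)/2 by ring, Real.exp_add]
  field_simp

/-- The optimal homodyne scale density is integrable on (0,1) and
S(0,1) = ∫_0^1 e^{-1/(2z)}√(z/(1−z)) dz = √(π/(2e)). -/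
theorem hom_scale_integrable :
    IntegrableOn Qhom (Set.Ioo 0 1) ∧
    ∫ z in Set.Ioo (0 : ℝ) 1, Qhom z =
      Real.sqrt (Real.pi / (2 * Real.exp 1)) := by
  have hderiv : ∀ x ∈ Ioi (0:ℝ),
      HasDerivWithinAt (fun x : ℝ => (1 + x ^ 2)⁻¹) (-(2 * x) / (1 + x ^ 2) ^ 2) (Ioi 0) x :=
    fun x _ => (subst_deriv x).hasDerivWithinAt
  have hEq : EqOn (fun x => |(-(2 * x) / (1 + x ^ 2) ^ 2)| • Qhom ((1 + x ^ 2)⁻¹))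
      (fun x => 2 * Real.exp (-(1:ℝ) / 2) * ellH x) (Ioi 0) :=
    fun x hx => pointwise_eq hx
  have hintR : IntegrableOn (fun x => |(-(2 * x) / (1 + x ^ 2) ^ 2)| • Qhom ((1 + x ^ 2)⁻¹))
      (Ioi 0) := by
    refine (IntegrableOn.congr_fun ?_ hEq.symm measurableSet_Ioi)
    exact (ell_integrableOn.const_mul _)
  constructor
  · rw [← subst_map]
    exact (integrableOn_image_iff_integrableOn_abs_deriv_smul measurableSet_Ioi hderiv
      subst_inj Qhom).2 hintR
  · rw [← subst_map,
      integral_image_eq_integral_abs_deriv_smul measurableSet_Ioi hderiv subst_inj Qhom,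
      setIntegral_congr_fun measurableSet_Ioi hEq,
      integral_const_mul, ell_integral]
    have he : Real.sqrt (Real.exp 1) = Real.exp (1/2) := by
      rw [show Real.exp 1 = Real.exp (1/2) ^ 2 by
        rw [← Real.exp_nat_mul]; norm_num, Real.sqrt_sq (Real.exp_pos _).le]
    have h2 : Real.sqrt (2 * π) = Real.sqrt 2 * Real.sqrt π :=
      Real.sqrt_mul (by norm_num) _
    have hrhs : Real.sqrt (π / (2 * Real.exp 1))
        = Real.sqrt π / (Real.sqrt 2 * Real.exp (1/2)) := by
      rw [Real.sqrt_div Real.pi_pos.le, Real.sqrt_mul (by norm_num), he]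
    have hexpinv : Real.exp (-(1:ℝ)/2) = (Real.exp (1/2))⁻¹ := by
      rw [← Real.exp_neg]; norm_num
    rw [hrhs, hexpinv, h2]
    have hs2 : Real.sqrt 2 ≠ 0 := by positivity
    have hE : Real.exp (1/2 : ℝ) ≠ 0 := (Real.exp_pos _).ne'
    field_simp
    linear_combination (2 : ℝ) *
      Real.mul_self_sqrt (by norm_num : (0:ℝ) ≤ 2)
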